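/- Let ζ = exp(2πi/5) and φ = (1+√5)/2. Then 2·D₂(ζ) − D₂(ζ²) = 2·D₂(φ·exp(πi/5)). (This is the Bloch–Wigner identity underlying the scissors-congruence computation N₂ ≡ ±10[e^{πi/5}φ] of §6 of the paper, which evaluates the limiting regulator of the coordinate symbol at the second node of the conifold curve.) -/

import Mathlib

/-- The dilogarithm Li₂(z) = −∫₀¹ Log(1−z·t)/t dt, with the principal branch Log. -/
noncomputable def Li2 (z : ℂ) : ℂ :=
  -∫ t in (0 : ℝ)..(1 : ℝ), Complex.log (1 - z * (t : ℂ)) / (t : ℂ)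

/-- The Bloch–Wigner function D₂(z) = Im(Li₂(z)) + arg(1−z)·log|z|. -/
noncomputable def D2 (z : ℂ) : ℝ :=
  (Li2 z).im + Complex.arg (1 - z) * Real.log (‖z‖)

/-- ζ = exp(2πi/5). -/
noncomputable def ζ5 : ℂ := Complex.exp (2 * Real.pi * Complex.I / 5)

/-- The golden ratio φ = (1+√5)/2, as a complex number. -/
noncomputable def goldφ : ℂ := (((1 + Real.sqrt 5) / 2 : ℝ) : ℂ)

namespace BW

open Complex MeasureTheory Set Filter Real Topology
open scoped Interval

/-! ### basic trig numerology -/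

lemma hc2_pos : 0 < Real.cos (2*π/5) := by
  have hπ := Real.pi_pos
  exact Real.cos_pos_of_mem_Ioo ⟨by linarith, by linarith⟩

lemma hc2_lt_half : Real.cos (2*π/5) < 1/2 := by
  have hπ := Real.pi_pos
  have h := Real.strictAntiOn_cos ⟨by linarith, by linarith⟩
    (⟨by linarith, by linarith⟩ : 2*π/5 ∈ Icc 0 π) (by linarith : π/3 < 2*π/5)
  rwa [Real.cos_pi_div_three] at h

lemma hs2_pos : 0 < Real.sin (2*π/5) := by
  have hπ := Real.pi_pos
  exact Real.sin_pos_of_pos_of_lt_pi (by linarith) (by linarith)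

lemma hs2_half : 1/2 < Real.sin (2*π/5) := by
  have hπ := Real.pi_pos
  have h := Real.strictMonoOn_sin ⟨by linarith, by linarith⟩
    (⟨by linarith, by linarith⟩ : 2*π/5 ∈ Icc (-(π/2)) (π/2)) (by linarith : π/6 < 2*π/5)
  rwa [Real.sin_pi_div_six] at h

lemma hs2_le : Real.sin (2*π/5) ≤ 1 := Real.sin_le_one _

lemma hs4_pos : 0 < Real.sin (4*π/5) := by
  apply Real.sin_pos_of_pos_of_lt_pi (by positivity)
  nlinarith [Real.pi_pos]

lemma zeta_eq : ζ5 = ↑(Real.cos (2*π/5)) + ↑(Real.sin (2*π/5)) * I := by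
  rw [ζ5, show (2 * ↑π * I / 5 : ℂ) = ((2*π/5 : ℝ) : ℂ) * I by push_cast; ring,
    Complex.exp_mul_I, Complex.ofReal_cos, Complex.ofReal_sin]

lemma zeta_sq_eq : ζ5^2 = ↑(Real.cos (4*π/5)) + ↑(Real.sin (4*π/5)) * I := by
  rw [ζ5, sq, ← Complex.exp_add,
    show (2 * ↑π * I / 5 + 2 * ↑π * I / 5 : ℂ) = ((4*π/5 : ℝ) : ℂ) * I by push_cast; ring,
    Complex.exp_mul_I, Complex.ofReal_cos, Complex.ofReal_sin]

lemma zeta_ne : ζ5 ≠ 0 := by rw [ζ5]; exact Complex.exp_ne_zero _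

/-! ### the regularized integrand -/

noncomputable def slog (u : ℂ) : ℂ := if u = 0 then 1 else Complex.log (1 + u) / u

noncomputable def FF (z : ℂ) (t : ℝ) : ℂ := -z * slog (-z * (t : ℂ))

lemma slog_zero : slog 0 = 1 := if_pos rfl

lemma slog_of_ne {u : ℂ} (hu : u ≠ 0) : slog u = Complex.log (1 + u) / u := if_neg hu

lemma FF_eq {z : ℂ} {t : ℝ} (ht : t ≠ 0) :
    FF z t = Complex.log (1 - z * (t : ℂ)) / (t : ℂ) := by
  rcases eq_or_ne z 0 with rfl | hz
  · simp [FF, slog_zero]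
  · have hnz : -z * (t : ℂ) ≠ 0 :=
      mul_ne_zero (neg_ne_zero.2 hz) (Complex.ofReal_ne_zero.2 ht)
    rw [FF, slog_of_ne hnz, show (1 : ℂ) + -z * (t:ℂ) = 1 - z * (t:ℂ) by ring]
    field_simp

lemma FF_zero (z : ℂ) : FF z 0 = -z := by simp [FF, slog_zero]

lemma continuousAt_slog {u : ℂ} (hu : 1 + u ∈ Complex.slitPlane) : ContinuousAt slog u := by
  rcases eq_or_ne u 0 with rfl | hu0
  · have hd : HasDerivAt Complex.log 1 1 := by
      simpa using Complex.hasDerivAt_log Complex.one_mem_slitPlane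
    have hs : Tendsto (slope Complex.log 1) (𝓝[≠] 1) (𝓝 1) :=
      hasDerivAt_iff_tendsto_slope.mp hd
    have hmap : Tendsto (fun v : ℂ => 1 + v) (𝓝[≠] (0:ℂ)) (𝓝[≠] (1:ℂ)) := by
      rw [tendsto_nhdsWithin_iff]
      constructor
      · have : Tendsto (fun v : ℂ => 1 + v) (𝓝 0) (𝓝 1) :=
          Continuous.tendsto' (by continuity) 0 1 (by simp)
        exact this.mono_left nhdsWithin_le_nhds
      · exact eventually_mem_nhdsWithin.mono (fun v hv => by
          simp only [Set.mem_compl_iff, Set.mem_singleton_iff] at hv ⊢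
          exact fun h => hv (by linear_combination h))
    have htend : Tendsto slog (𝓝[≠] (0:ℂ)) (𝓝 1) := by
      refine (hs.comp hmap).congr' ?_
      filter_upwards [eventually_mem_nhdsWithin] with v hv
      have hv0 : v ≠ 0 := hv
      simp only [Function.comp_apply, slope_def_field, Complex.log_one]
      rw [slog_of_ne hv0]
      congr 1 <;> ring
    have : Tendsto slog (𝓝 (0:ℂ)) (𝓝 1) := by
      rw [← nhdsNE_sup_pure (0:ℂ)]
      refine Filter.Tendsto.sup htend ?_
      simpa [slog_zero] using tendsto_pure_nhds slog (0:ℂ)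
    simpa [ContinuousAt, slog_zero] using this
  · have hcont : ContinuousAt (fun v : ℂ => Complex.log (1 + v) / v) u := by
      refine ContinuousAt.div ?_ continuousAt_id hu0
      exact (continuousAt_clog hu).comp (by fun_prop)
    refine hcont.congr ?_
    filter_upwards [compl_singleton_mem_nhds hu0] with v hv
    exact (slog_of_ne hv).symm

lemma continuousAt_FF {z : ℂ} {t : ℝ} (h : 1 - z * (t:ℂ) ∈ Complex.slitPlane) :
    ContinuousAt (FF z) t := by
  have h2 : ContinuousAt slog (-z * (t:ℂ)) :=
    continuousAt_slog (by rwa [show (1:ℂ) + -z * (t:ℂ) = 1 - z * (t:ℂ) by ring])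
  have h1 : ContinuousAt (fun s : ℝ => -z * (s:ℂ)) t := by fun_prop
  have h3 : ContinuousAt (fun s : ℝ => slog (-z * (s:ℂ))) t := ContinuousAt.comp (f := fun s : ℝ => -z * (s:ℂ)) h2 h1
  exact continuousAt_const.mul h3

lemma continuousOn_FF {z : ℂ} (hz : ∀ t : ℝ, t ∈ Icc (0:ℝ) 1 → 1 - z * (t:ℂ) ∈ Complex.slitPlane) :
    ContinuousOn (FF z) (Icc 0 1) :=
  fun t ht => (continuousAt_FF (hz t ht)).continuousWithinAt

lemma ae_ne_zero : ∀ᵐ (t : ℝ), t ≠ 0 := by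
  rw [ae_iff]
  have : {a : ℝ | ¬a ≠ 0} = {(0:ℝ)} := by ext t; simp
  rw [this]
  exact measure_singleton 0

lemma Li2_eq (z : ℂ) : Li2 z = -∫ t in (0:ℝ)..1, FF z t := by
  unfold Li2
  congr 1
  apply intervalIntegral.integral_congr_ae
  filter_upwards [ae_ne_zero] with t ht _
  exact (FF_eq ht).symm

/-! ### derivative of Li₂ along a real segment -/

lemma li2_hasDerivAt (a b : ℂ) (x₀ ε m : ℝ) (hε : 0 < ε) (hm : 0 < m)
    (hslit : ∀ x ∈ Metric.ball x₀ ε, ∀ t ∈ Icc (0:ℝ) 1,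
      1 - (a + (x:ℂ)*b) * (t:ℂ) ∈ Complex.slitPlane)
    (hlow : ∀ x ∈ Metric.ball x₀ ε, ∀ t ∈ Icc (0:ℝ) 1,
      m ≤ ‖1 - (a + (x:ℂ)*b) * (t:ℂ)‖)
    (hz : a + (x₀:ℂ)*b ≠ 0) :
    HasDerivAt (fun x : ℝ => Li2 (a + (x:ℂ)*b))
      (-b * Complex.log (1 - (a + (x₀:ℂ)*b)) / (a + (x₀:ℂ)*b)) x₀ := by
  have hx₀ : x₀ ∈ Metric.ball x₀ ε := Metric.mem_ball_self hε
  have hIoc : Ι (0:ℝ) 1 = Ioc (0:ℝ) 1 := uIoc_of_le zero_le_one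
  have hIcc : uIcc (0:ℝ) 1 = Icc (0:ℝ) 1 := uIcc_of_le zero_le_one
  have hne : ∀ x ∈ Metric.ball x₀ ε, ∀ t ∈ Icc (0:ℝ) 1,
      1 - (a + (x:ℂ)*b) * (t:ℂ) ≠ 0 := by
    intro x hx t ht h0
    have := hlow x hx t ht
    rw [h0] at this
    simp at this
    linarith
  have main := intervalIntegral.hasDerivAt_integral_of_dominated_loc_of_deriv_le
      (F := fun (x:ℝ) (t:ℝ) => FF (a + (x:ℂ)*b) t)
      (F' := fun (x:ℝ) (t:ℝ) => -b / (1 - (a + (x:ℂ)*b) * (t:ℂ)))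
      (bound := fun _ => ‖b‖ / m) (a := 0) (b := 1) (x₀ := x₀) (μ := volume) (Metric.ball_mem_nhds x₀ hε)
      ?meas ?int ?meas' ?bd ?bint ?diff
  case meas =>
    filter_upwards [Metric.ball_mem_nhds x₀ hε] with x hx
    rw [hIoc]
    exact ((continuousOn_FF (hslit x hx)).mono Ioc_subset_Icc_self).aestronglyMeasurable
      measurableSet_Ioc
  case int =>
    apply ContinuousOn.intervalIntegrable
    rw [hIcc]
    exact continuousOn_FF (hslit x₀ hx₀)
  case meas' =>
    rw [hIoc]
    refine (ContinuousOn.aestronglyMeasurable ?_ measurableSet_Ioc)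
    refine ContinuousOn.div continuousOn_const ?_ ?_
    · fun_prop
    · exact fun t ht => hne x₀ hx₀ t (Ioc_subset_Icc_self ht)
  case bd =>
    filter_upwards with t ht x hx
    rw [hIoc] at ht
    have ht' : t ∈ Icc (0:ℝ) 1 := Ioc_subset_Icc_self ht
    rw [norm_div, norm_neg]
    apply div_le_div_of_nonneg_left ?_ hm (hlow x hx t ht')
    · exact norm_nonneg _
  case bint => exact intervalIntegrable_const
  case diff =>
    filter_upwards with t ht x hx
    rw [hIoc] at ht
    have ht0 : t ≠ 0 := ne_of_gt ht.1
    have ht' : t ∈ Icc (0:ℝ) 1 := Ioc_subset_Icc_self ht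
    have hfe : (fun x : ℝ => FF (a + (x:ℂ)*b) t)
        = fun x : ℝ => Complex.log (1 - (a + (x:ℂ)*b) * (t:ℂ)) / (t:ℂ) :=
      funext fun y => FF_eq ht0
    rw [hfe]
    have hinner : HasDerivAt (fun x : ℝ => 1 - (a + (x:ℂ)*b) * (t:ℂ)) (-(b*(t:ℂ))) x := by
      have h1 : HasDerivAt (fun x : ℝ => (a + (x:ℂ)*b) * (t:ℂ)) (b*(t:ℂ)) x := by
        have := ((Complex.ofRealCLM.hasDerivAt (x := x)).mul_const b).const_add a
        simpa using this.mul_const (t:ℂ)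
      simpa using h1.const_sub 1
    have hlog := hinner.clog_real (hslit x hx t ht')
    have := hlog.div_const (t:ℂ)
    convert this using 1
    case e'_4 => rfl
    have hden := hne x hx t ht'
    have htC : (t:ℂ) ≠ 0 := Complex.ofReal_ne_zero.2 ht0
    field_simp
  -- now compute the integral of the derivative
  set z₀ := a + (x₀:ℂ)*b with hz₀
  have hkey : (∫ t in (0:ℝ)..1, -b / (1 - z₀ * (t:ℂ)))
      = b * Complex.log (1 - z₀) / z₀ := by
    have hder : ∀ t ∈ uIcc (0:ℝ) 1,
        HasDerivAt (fun t : ℝ => (b/z₀) * Complex.log (1 - z₀ * (t:ℂ)))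
          (-b / (1 - z₀ * (t:ℂ))) t := by
      intro t ht
      rw [hIcc] at ht
      have hinner : HasDerivAt (fun t : ℝ => 1 - z₀ * (t:ℂ)) (-z₀) t := by
        have h1 : HasDerivAt (fun t : ℝ => z₀ * (t:ℂ)) z₀ t := by
          simpa using (Complex.ofRealCLM.hasDerivAt (x := t)).const_mul z₀
        simpa using h1.const_sub 1
      have hlog := hinner.clog_real (hslit x₀ hx₀ t ht)
      have := hlog.const_mul (b/z₀)
      convert this using 1
      case e'_4 => rfl
      have hden := hne x₀ hx₀ t ht
      field_simp
    have hint : IntervalIntegrable (fun t : ℝ => -b / (1 - z₀ * (t:ℂ))) volume 0 1 := by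
      apply ContinuousOn.intervalIntegrable
      rw [hIcc]
      refine ContinuousOn.div continuousOn_const (by fun_prop) ?_
      exact fun t ht => hne x₀ hx₀ t ht
    rw [intervalIntegral.integral_eq_sub_of_hasDerivAt hder hint]
    simp [Complex.log_one]
    ring
  rw [hkey] at main
  have hfinal := main.2.neg
  have hcongr : (fun x : ℝ => Li2 (a + (x:ℂ)*b))
      =ᶠ[nhds x₀] (fun x : ℝ => -∫ t in (0:ℝ)..1, FF (a + (x:ℂ)*b) t) :=
    Filter.Eventually.of_forall fun x => Li2_eq _
  have hres := HasDerivAt.congr_of_eventuallyEq hfinal hcongr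
  convert hres using 1
  case e'_4 => rfl
  ring

/-! ### duplication: Li₂(ζ²) = 2Li₂(ζ) + 2Li₂(−ζ) -/

lemma slit12 : ∀ t : ℝ, t ∈ Icc (0:ℝ) 1 → 1 - ζ5^2 * (t:ℂ) ∈ Complex.slitPlane := by
  intro t ht
  rcases eq_or_lt_of_le ht.1 with h0 | h0
  · rw [← h0]; simpa using Complex.one_mem_slitPlane
  · apply Complex.mem_slitPlane_iff.2 (Or.inr ?_)
    rw [zeta_sq_eq]
    simp only [Complex.sub_im, Complex.one_im, Complex.mul_im, Complex.add_re,
      Complex.ofReal_re, Complex.mul_re, Complex.I_re, Complex.ofReal_im, Complex.I_im,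
      Complex.add_im]
    have := hs4_pos
    intro h
    nlinarith

lemma slit1p (s : ℝ) (hs : s ∈ Icc (0:ℝ) 1) : 1 - ζ5 * (s:ℂ) ∈ Complex.slitPlane := by
  apply Complex.mem_slitPlane_iff.2 (Or.inl ?_)
  rw [zeta_eq]
  simp only [Complex.sub_re, Complex.one_re, Complex.mul_re, Complex.add_re, Complex.ofReal_re,
    Complex.mul_im, Complex.I_re, Complex.ofReal_im, Complex.I_im, Complex.add_im,
    mul_one, mul_zero]
  have h1 := hc2_pos; have h2 := hc2_lt_half
  nlinarith [hs.1, hs.2]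

lemma slit1m (s : ℝ) (hs : s ∈ Icc (0:ℝ) 1) : 1 - (-ζ5) * (s:ℂ) ∈ Complex.slitPlane := by
  apply Complex.mem_slitPlane_iff.2 (Or.inl ?_)
  rw [zeta_eq]
  simp only [neg_add, Complex.sub_re, Complex.one_re, Complex.mul_re, Complex.add_re,
    Complex.neg_re, Complex.ofReal_re, Complex.neg_im, Complex.mul_im, Complex.I_re,
    Complex.ofReal_im, Complex.I_im, Complex.add_im]
  have h1 := hc2_pos; have h2 := hc2_lt_half
  nlinarith [hs.1, hs.2]

lemma dup : Li2 (ζ5^2) = 2 * Li2 ζ5 + 2 * Li2 (-ζ5) := by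
  have hIcc : uIcc (0:ℝ) 1 = Icc (0:ℝ) 1 := uIcc_of_le zero_le_one
  -- substitution t = s²
  have hsub : (∫ s in (0:ℝ)..1, (2*s) • FF (ζ5^2) (s^2))
      = ∫ t in (0:ℝ)..1, FF (ζ5^2) t := by
    have h := intervalIntegral.integral_comp_smul_deriv' (a := 0) (b := 1)
      (f := fun s : ℝ => s^2) (f' := fun s : ℝ => 2*s) (g := FF (ζ5^2))
      (fun x _ => by simpa using hasDerivAt_pow 2 x)
      (by fun_prop)
      ?_
    · simpa using h
    · refine (continuousOn_FF slit12).mono ?_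
      rintro u ⟨s, hs, rfl⟩
      rw [hIcc] at hs
      refine ⟨sq_nonneg s, ?_⟩
      have : s^2 ≤ 1 := by nlinarith [hs.1, hs.2]
      simpa using this
  -- pointwise identity
  have hpt : EqOn (fun s : ℝ => (2*s) • FF (ζ5^2) (s^2))
      (fun s : ℝ => (2:ℝ) • (FF ζ5 s + FF (-ζ5) s)) (uIcc (0:ℝ) 1) := by
    intro s hs
    rw [hIcc] at hs
    rcases eq_or_lt_of_le hs.1 with h0 | h0
    · simp only [← h0]
      norm_num [FF_zero]
    · have hs0 : s ≠ 0 := ne_of_gt h0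
      have hs20 : s^2 ≠ 0 := pow_ne_zero _ hs0
      simp only
      rw [FF_eq hs0, FF_eq hs0, FF_eq hs20]
      have hfact : 1 - ζ5^2 * ((s^2 : ℝ) : ℂ) = (1 - ζ5*(s:ℂ)) * (1 - (-ζ5)*(s:ℂ)) := by
        push_cast; ring
      have hx := slit1p s hs
      have hy := slit1m s hs
      have hxre : 0 < (1 - ζ5*(s:ℂ)).re := by
        rw [zeta_eq]
        simp only [Complex.sub_re, Complex.one_re, Complex.mul_re, Complex.add_re,
          Complex.ofReal_re, Complex.mul_im, Complex.I_re, Complex.ofReal_im, Complex.I_im,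
          Complex.add_im]
        have h1 := hc2_pos; have h2 := hc2_lt_half
        nlinarith [hs.1, hs.2]
      have hyre : 0 < (1 - (-ζ5)*(s:ℂ)).re := by
        rw [zeta_eq]
        simp only [neg_add, Complex.sub_re, Complex.one_re, Complex.mul_re, Complex.add_re,
          Complex.neg_re, Complex.ofReal_re, Complex.neg_im, Complex.mul_im, Complex.I_re,
          Complex.ofReal_im, Complex.I_im, Complex.add_im]
        have h1 := hc2_pos; have h2 := hc2_lt_half
        nlinarith [hs.1, hs.2]
      have hx0 : (1 - ζ5*(s:ℂ)) ≠ 0 := fun h => by rw [h] at hxre; simp at hxre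
      have hy0 : (1 - (-ζ5)*(s:ℂ)) ≠ 0 := fun h => by rw [h] at hyre; simp at hyre
      have hargx : |Complex.arg (1 - ζ5*(s:ℂ))| < π/2 :=
        Complex.abs_arg_lt_pi_div_two_iff.2 (Or.inl hxre)
      have hargy : |Complex.arg (1 - (-ζ5)*(s:ℂ))| < π/2 :=
        Complex.abs_arg_lt_pi_div_two_iff.2 (Or.inl hyre)
      have hlog : Complex.log (1 - ζ5^2 * ((s^2 : ℝ) : ℂ))
          = Complex.log (1 - ζ5*(s:ℂ)) + Complex.log (1 - (-ζ5)*(s:ℂ)) := by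
        rw [hfact]
        refine (Complex.log_mul_eq_add_log_iff hx0 hy0).2 ?_
        constructor
        · have := abs_lt.1 hargx; have := abs_lt.1 hargy; linarith
        · have := abs_lt.1 hargx; have := abs_lt.1 hargy; linarith
      rw [hlog]
      have hsC : (s:ℂ) ≠ 0 := Complex.ofReal_ne_zero.2 hs0
      push_cast
      rw [Complex.real_smul, Complex.real_smul]
      push_cast
      field_simp
  rw [intervalIntegral.integral_congr hpt] at hsub
  rw [intervalIntegral.integral_smul] at hsub
  have hadd : (∫ s in (0:ℝ)..1, (FF ζ5 s + FF (-ζ5) s))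
      = (∫ s in (0:ℝ)..1, FF ζ5 s) + ∫ s in (0:ℝ)..1, FF (-ζ5) s := by
    apply intervalIntegral.integral_add
    · apply ContinuousOn.intervalIntegrable; rw [hIcc]; exact continuousOn_FF slit1p
    · apply ContinuousOn.intervalIntegrable; rw [hIcc]; exact continuousOn_FF slit1m
  rw [hadd] at hsub
  rw [Li2_eq, Li2_eq, Li2_eq, ← hsub]
  rw [Complex.real_smul]
  push_cast
  ring

/-! ### the function g(x) = Li₂(1+xζ) + Li₂(−xζ) + log(1+xζ)·log(−xζ) -/

noncomputable def gfun (x : ℝ) : ℂ :=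
  Li2 (1 + (x:ℂ)*ζ5) + Li2 (-((x:ℂ)*ζ5))
    + Complex.log (1 + (x:ℂ)*ζ5) * Complex.log (-((x:ℂ)*ζ5))

lemma im_one_add (x : ℝ) : (1 + (x:ℂ)*ζ5).im = x * Real.sin (2*π/5) := by
  rw [zeta_eq]
  simp only [Complex.add_im, Complex.one_im, Complex.mul_im, Complex.ofReal_re,
    Complex.ofReal_im, Complex.I_im, Complex.I_re, Complex.mul_re, Complex.add_re,
    mul_zero, mul_one, zero_mul]
  ring

lemma im_neg_xz (x : ℝ) : (-((x:ℂ)*ζ5)).im = -(x * Real.sin (2*π/5)) := by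
  rw [zeta_eq]
  simp only [Complex.neg_im, Complex.add_im, Complex.one_im, Complex.mul_im, Complex.ofReal_re,
    Complex.ofReal_im, Complex.I_im, Complex.I_re, Complex.mul_re, Complex.add_re,
    mul_zero, mul_one, zero_mul]
  ring

lemma one_add_ne {x : ℝ} (hx : 0 < x) : 1 + (x:ℂ)*ζ5 ≠ 0 := by
  intro h
  have := congrArg Complex.im h
  rw [im_one_add] at this
  simp only [Complex.zero_im] at this
  have h2 := hs2_pos
  nlinarith [mul_pos hx h2]

lemma xz_ne {x : ℝ} (hx : x ≠ 0) : ((x:ℂ)*ζ5) ≠ 0 :=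
  mul_ne_zero (Complex.ofReal_ne_zero.2 hx) zeta_ne

lemma slit_one_add {x : ℝ} (hx : 0 < x) : 1 + (x:ℂ)*ζ5 ∈ Complex.slitPlane := by
  refine Complex.mem_slitPlane_iff.2 (Or.inr ?_)
  rw [im_one_add]
  have := hs2_pos
  positivity

lemma slit_neg_xz {x : ℝ} (hx : 0 < x) : -((x:ℂ)*ζ5) ∈ Complex.slitPlane := by
  refine Complex.mem_slitPlane_iff.2 (Or.inr ?_)
  rw [im_neg_xz]
  have := hs2_pos
  intro h
  nlinarith

lemma d1_deriv {x₀ : ℝ} (hx : x₀ ∈ Ioc (0:ℝ) 1) :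
    HasDerivAt (fun x : ℝ => Li2 (1 + (x:ℂ)*ζ5))
      (-ζ5 * Complex.log (-((x₀:ℂ)*ζ5)) / (1 + (x₀:ℂ)*ζ5)) x₀ := by
  obtain ⟨hx0, hx1⟩ := hx
  have hc1 := hc2_pos; have hc2 := hc2_lt_half
  have hsp := hs2_pos; have hsh := hs2_half; have hsl := hs2_le
  have h := li2_hasDerivAt 1 ζ5 x₀ (x₀/2) (x₀/8) (by linarith) (by linarith)
    ?_ ?_ (one_add_ne hx0)
  · have e1 : (1:ℂ) - (1 + (x₀:ℂ)*ζ5) = -((x₀:ℂ)*ζ5) := by ring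
    rw [e1] at h
    convert h using 2 <;> ring
  · intro x hxb t ht
    rw [Metric.mem_ball, Real.dist_eq] at hxb
    have hxp : 0 < x := by cases abs_lt.1 hxb; linarith
    rcases eq_or_lt_of_le ht.1 with h0 | h0
    · rw [← h0]; simpa using Complex.one_mem_slitPlane
    · refine Complex.mem_slitPlane_iff.2 (Or.inr ?_)
      rw [zeta_eq]
      simp only [Complex.sub_im, Complex.one_im, Complex.mul_im, Complex.add_re, Complex.one_re,
        Complex.mul_re, Complex.ofReal_re, Complex.I_re, Complex.ofReal_im, Complex.I_im,
        Complex.add_im, mul_one, mul_zero]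
      intro hcon
      nlinarith [mul_pos (mul_pos hxp hsp) h0]
  · intro x hxb t ht
    rw [Metric.mem_ball, Real.dist_eq] at hxb
    obtain ⟨hb1, hb2⟩ := abs_lt.1 hxb
    have hxp : 0 < x := by linarith
    rcases le_or_gt t (1/2) with hhalf | hhalf
    · calc x₀/8 ≤ (1 - (1 + (x:ℂ)*ζ5)*(t:ℂ)).re := by
            rw [zeta_eq]
            simp only [Complex.sub_re, Complex.one_re, Complex.mul_re, Complex.add_re,
              Complex.ofReal_re, Complex.mul_im, Complex.I_re, Complex.ofReal_im,
              Complex.I_im, Complex.add_im, mul_one, mul_zero]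
            have e1 : x * Real.cos (2*π/5) ≤ (3*x₀/2)*(1/2) := by nlinarith
            have e2 : x * Real.cos (2*π/5) * t ≤ ((3*x₀/2)*(1/2))*(1/2) :=
              mul_le_mul e1 hhalf ht.1 (by positivity)
            nlinarith [ht.1, ht.2]
        _ ≤ ‖1 - (1 + (x:ℂ)*ζ5)*(t:ℂ)‖ := Complex.re_le_norm _
    · calc x₀/8 ≤ |(1 - (1 + (x:ℂ)*ζ5)*(t:ℂ)).im| := by
            rw [zeta_eq]
            simp only [Complex.sub_im, Complex.one_im, Complex.mul_im, Complex.add_re,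
              Complex.one_re, Complex.mul_re, Complex.ofReal_re, Complex.I_re,
              Complex.ofReal_im, Complex.I_im, Complex.add_im, mul_one, mul_zero]
            rw [abs_of_nonpos (by nlinarith [mul_nonneg (mul_nonneg hxp.le hsp.le) ht.1])]
            have e1 : x₀/4 ≤ x * Real.sin (2*π/5) := by nlinarith
            have e2 : x₀/4 * (1/2) ≤ x * Real.sin (2*π/5) * t :=
              mul_le_mul e1 hhalf.le (by norm_num) (by positivity)
            nlinarith [ht.2]
        _ ≤ ‖1 - (1 + (x:ℂ)*ζ5)*(t:ℂ)‖ := Complex.abs_im_le_norm _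

lemma d2_deriv {x₀ : ℝ} (hx : x₀ ∈ Ioc (0:ℝ) 1) :
    HasDerivAt (fun x : ℝ => Li2 (-((x:ℂ)*ζ5)))
      (ζ5 * Complex.log (1 + (x₀:ℂ)*ζ5) / (-((x₀:ℂ)*ζ5))) x₀ := by
  obtain ⟨hx0, hx1⟩ := hx
  have hc1 := hc2_pos
  have hsp := hs2_pos
  have h := li2_hasDerivAt 0 (-ζ5) x₀ (x₀/2) 1 (by linarith) one_pos ?_ ?_ ?_
  · have e1 : (1:ℂ) - (0 + (x₀:ℂ)*(-ζ5)) = 1 + (x₀:ℂ)*ζ5 := by ring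
    rw [e1] at h
    have hcongr : (fun x : ℝ => Li2 (-((x:ℂ)*ζ5)))
        =ᶠ[nhds x₀] (fun x : ℝ => Li2 (0 + (x:ℂ)*(-ζ5))) :=
      Filter.Eventually.of_forall fun x => congrArg Li2 (by ring)
    refine (HasDerivAt.congr_of_eventuallyEq h hcongr).congr_deriv ?_
    rw [show (0:ℂ) + (x₀:ℂ)*(-ζ5) = -((x₀:ℂ)*ζ5) by ring]
    ring
  · intro x hxb t ht
    rw [Metric.mem_ball, Real.dist_eq] at hxb
    have hxp : 0 < x := by cases abs_lt.1 hxb; linarith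
    rcases eq_or_lt_of_le ht.1 with h0 | h0
    · rw [← h0]; simpa using Complex.one_mem_slitPlane
    · refine Complex.mem_slitPlane_iff.2 (Or.inr ?_)
      rw [zeta_eq]
      simp only [neg_add, Complex.sub_im, Complex.one_im, Complex.mul_im, Complex.add_re,
        Complex.zero_re, Complex.neg_re, Complex.mul_re, Complex.ofReal_re, Complex.I_re,
        Complex.ofReal_im, Complex.neg_im, Complex.I_im, Complex.add_im, Complex.zero_im,
        mul_one, mul_zero]
      intro hcon
      nlinarith [mul_pos (mul_pos hxp hsp) h0]
  · intro x hxb t ht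
    rw [Metric.mem_ball, Real.dist_eq] at hxb
    have hxp : 0 < x := by cases abs_lt.1 hxb; linarith
    calc (1:ℝ) ≤ (1 - (0 + (x:ℂ)*(-ζ5))*(t:ℂ)).re := by
          rw [zeta_eq]
          simp only [neg_add, Complex.sub_re, Complex.one_re, Complex.mul_re, Complex.add_re,
            Complex.zero_re, Complex.neg_re, Complex.ofReal_re, Complex.mul_im, Complex.I_re,
            Complex.ofReal_im, Complex.neg_im, Complex.I_im, Complex.add_im, Complex.zero_im,
            mul_one, mul_zero]
          nlinarith [mul_nonneg (mul_nonneg hxp.le hc1.le) ht.1]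
      _ ≤ ‖1 - (0 + (x:ℂ)*(-ζ5))*(t:ℂ)‖ := Complex.re_le_norm _
  · rw [show (0:ℂ) + (x₀:ℂ)*(-ζ5) = -((x₀:ℂ)*ζ5) by ring]
    exact neg_ne_zero.2 (xz_ne (ne_of_gt hx0))

lemma gfun_hasDeriv {x₀ : ℝ} (hx : x₀ ∈ Ioc (0:ℝ) 1) : HasDerivAt gfun 0 x₀ := by
  obtain ⟨hx0, hx1⟩ := hx
  have d1 := d1_deriv ⟨hx0, hx1⟩
  have d2 := d2_deriv ⟨hx0, hx1⟩
  have hinner3 : HasDerivAt (fun x : ℝ => 1 + (x:ℂ)*ζ5) ζ5 x₀ := by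
    simpa using ((Complex.ofRealCLM.hasDerivAt (x := x₀)).mul_const ζ5).const_add 1
  have d3 := hinner3.clog_real (slit_one_add hx0)
  have hinner4 : HasDerivAt (fun x : ℝ => -((x:ℂ)*ζ5)) (-ζ5) x₀ := by
    exact (by simpa using ((Complex.ofRealCLM.hasDerivAt (x := x₀)).mul_const ζ5) :
      HasDerivAt (fun y : ℝ => (y:ℂ)*ζ5) ζ5 x₀).neg
  have d4 := hinner4.clog_real (slit_neg_xz hx0)
  have sum := (d1.add d2).add (d3.mul d4)
  have hne1 : (1 + (x₀:ℂ)*ζ5) ≠ 0 := one_add_ne hx0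
  have hne2 : ((x₀:ℂ)*ζ5) ≠ 0 := xz_ne (ne_of_gt hx0)
  convert sum using 1
  case e'_4 => rfl
  case e'_8 => rfl
  have hx0C : (x₀:ℂ) ≠ 0 := Complex.ofReal_ne_zero.2 (ne_of_gt hx0)
  field_simp [zeta_ne, hx0C]
  ring

lemma gfun_const {x : ℝ} (hx : x ∈ Ioc (0:ℝ) 1) : gfun x = gfun 1 := by
  have hderiv : ∀ y ∈ uIcc x 1, HasDerivAt gfun ((fun _ => (0:ℂ)) y) y := by
    intro y hy
    rw [uIcc_of_le hx.2] at hy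
    exact gfun_hasDeriv ⟨lt_of_lt_of_le hx.1 hy.1, hy.2⟩
  have h := intervalIntegral.integral_eq_sub_of_hasDerivAt hderiv intervalIntegrable_const
  simp only [intervalIntegral.integral_const, smul_zero] at h
  exact (sub_eq_zero.mp h.symm).symm

lemma arg_le (v : ℂ) (hre : 0 < v.re) : |Complex.arg v| ≤ (π/2) * |v.im| / v.re := by
  have habs : 0 < ‖v‖ := by
    apply norm_pos_iff.mpr
    intro h; rw [h] at hre; simp at hre
  have h2 : |Complex.arg v| ≤ π/2 := le_of_lt (Complex.abs_arg_lt_pi_div_two_iff.2 (Or.inl hre))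
  have hsin : Real.sin |Complex.arg v| = |v.im| / ‖v‖ := by
    rcases le_or_gt 0 (Complex.arg v) with h0 | h0
    · have hs : 0 ≤ Real.sin (Complex.arg v) :=
        Real.sin_nonneg_of_nonneg_of_le_pi h0 (by linarith [(Complex.arg_mem_Ioc v).2])
      have him : 0 ≤ v.im := by
        have h' : Real.sin v.arg * ‖v‖ = v.im := by
          rw [Complex.sin_arg]; field_simp
        nlinarith [mul_nonneg hs habs.le]
      rw [_root_.abs_of_nonneg h0, Complex.sin_arg, _root_.abs_of_nonneg him]
    · have hs : Real.sin (Complex.arg v) ≤ 0 :=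
        Real.sin_nonpos_of_nonpos_of_neg_pi_le h0.le (by linarith [(Complex.arg_mem_Ioc v).1])
      have him : v.im ≤ 0 := by
        have h' : Real.sin v.arg * ‖v‖ = v.im := by
          rw [Complex.sin_arg]; field_simp
        nlinarith [mul_nonneg (neg_nonneg.2 hs) habs.le]
      rw [_root_.abs_of_neg h0, Real.sin_neg, Complex.sin_arg, _root_.abs_of_nonpos him]
      ring
  have hm := Real.mul_le_sin (abs_nonneg (Complex.arg v)) h2
  rw [hsin] at hm
  have hra : v.re ≤ ‖v‖ := Complex.re_le_norm v
  have h3 : |v.im| / ‖v‖ ≤ |v.im| / v.re :=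
    div_le_div_of_nonneg_left (abs_nonneg _) hre hra
  have hπ := Real.pi_pos
  have key := mul_le_mul_of_nonneg_left (le_trans hm h3) (by positivity : (0:ℝ) ≤ π/2)
  have hsimp : π/2 * (2/π * |Complex.arg v|) = |Complex.arg v| := by field_simp
  rw [mul_div_assoc]
  linarith

lemma abs_zeta : ‖ζ5‖ = 1 := by
  rw [ζ5, show (2 * ↑π * I / 5 : ℂ) = ((2*π/5 : ℝ) : ℂ) * I by push_cast; ring]
  exact Complex.norm_exp_ofReal_mul_I _

lemma slog_bound {u : ℂ} (hu : ‖u‖ ≤ 1/2) : ‖slog u‖ ≤ 2 := by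
  rcases eq_or_ne u 0 with rfl | h0
  · simp [slog_zero]
  · rw [slog_of_ne h0, norm_div]
    have habs : 0 < ‖u‖ := norm_pos_iff.mpr h0
    have hlog : ‖Complex.log (1+u)‖ ≤ 3/2 * ‖u‖ := by
      have := Complex.norm_log_one_add_half_le_self (z := u) hu
      exact this
    rw [div_le_iff₀ habs]
    nlinarith

lemma li2_small {x : ℝ} (hx : x ∈ Ioc (0:ℝ) (1/2)) :
    ‖Li2 (-((x:ℂ)*ζ5))‖ ≤ 2*x := by
  rw [Li2_eq]
  rw [norm_neg]
  have h := intervalIntegral.norm_integral_le_of_norm_le_const (C := 2*x)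
    (f := fun t : ℝ => FF (-((x:ℂ)*ζ5)) t) (a := 0) (b := 1) ?_
  · simpa using h
  · intro t ht
    rw [uIoc_of_le zero_le_one] at ht
    show ‖FF (-((x:ℂ)*ζ5)) t‖ ≤ 2*x
    have : FF (-((x:ℂ)*ζ5)) t = ((x:ℂ)*ζ5) * slog (((x:ℂ)*ζ5) * (t:ℂ)) := by
      rw [FF]; ring_nf
    rw [this, norm_mul, norm_mul, Complex.norm_real, Real.norm_eq_abs, abs_zeta,
      _root_.abs_of_pos hx.1]
    have hb : ‖(x:ℂ)*ζ5*(t:ℂ)‖ ≤ 1/2 := by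
      rw [norm_mul, norm_mul, Complex.norm_real, Real.norm_eq_abs, abs_zeta, Complex.norm_real, Real.norm_eq_abs,
        abs_of_pos hx.1, abs_of_pos ht.1]
      nlinarith [hx.1, hx.2, ht.1, ht.2]
    have := slog_bound hb
    nlinarith [hx.1, norm_nonneg (slog ((x:ℂ)*ζ5*(t:ℂ)))]

lemma re_seg (x t : ℝ) : (1 - (1 + (x:ℂ)*ζ5)*(t:ℂ)).re = 1 - t - x*Real.cos (2*π/5)*t := by
  rw [zeta_eq]
  simp only [Complex.sub_re, Complex.one_re, Complex.mul_re, Complex.add_re, Complex.ofReal_re,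
    Complex.mul_im, Complex.I_re, Complex.ofReal_im, Complex.I_im, Complex.add_im,
    Complex.one_im, mul_one, mul_zero, zero_mul]
  ring

lemma im_seg (x t : ℝ) : (1 - (1 + (x:ℂ)*ζ5)*(t:ℂ)).im = -(x*Real.sin (2*π/5)*t) := by
  rw [zeta_eq]
  simp only [Complex.sub_im, Complex.one_im, Complex.mul_im, Complex.add_re, Complex.one_re,
    Complex.mul_re, Complex.ofReal_re, Complex.I_re, Complex.ofReal_im, Complex.I_im,
    Complex.add_im, mul_one, mul_zero, zero_mul]
  ring

lemma slit_seg {x : ℝ} (hx : 0 < x) :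
    ∀ t : ℝ, t ∈ Icc (0:ℝ) 1 → 1 - (1 + (x:ℂ)*ζ5)*(t:ℂ) ∈ Complex.slitPlane := by
  intro t ht
  rcases eq_or_lt_of_le ht.1 with h0 | h0
  · rw [← h0]; simpa using Complex.one_mem_slitPlane
  · refine Complex.mem_slitPlane_iff.2 (Or.inr ?_)
    rw [im_seg]
    have := hs2_pos
    intro h
    nlinarith [mul_pos (mul_pos hx this) h0]

lemma im_li2_seg_small {x : ℝ} (hx : x ∈ Ioc (0:ℝ) (1/4)) :
    |(Li2 (1 + (x:ℂ)*ζ5)).im| ≤ 4*π*Real.sqrt x := by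
  obtain ⟨hx0, hx14⟩ := hx
  have hπ := Real.pi_pos
  set r := Real.sqrt x with hrdef
  have hr0 : 0 < r := Real.sqrt_pos.2 hx0
  have hrsq : r^2 = x := Real.sq_sqrt hx0.le
  have hrhalf : r ≤ 1/2 := by
    rw [hrdef, show (1/2 : ℝ) = Real.sqrt (1/4) by
      rw [show (1/4:ℝ) = (1/2)^2 by norm_num, Real.sqrt_sq (by norm_num)] ]
    exact Real.sqrt_le_sqrt hx14
  have hxr : x ≤ r/2 := by nlinarith
  set z := 1 + (x:ℂ)*ζ5 with hzdef
  have hslit := slit_seg hx0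
  have hcont := continuousOn_FF hslit
  -- imaginary part of the interval integral
  have hint : IntegrableOn (FF z) (Ioc (0:ℝ) 1) volume :=
    (hcont.integrableOn_Icc).mono_set Ioc_subset_Icc_self
  have him : (Li2 z).im = -∫ t in (0:ℝ)..1, (FF z t).im := by
    rw [Li2_eq z, Complex.neg_im]
    congr 1
    rw [intervalIntegral.integral_of_le zero_le_one, intervalIntegral.integral_of_le zero_le_one]
    exact (integral_im hint).symm
  -- pointwise bound for t in (0, 1-r]
  have hbd1 : ∀ t ∈ Ι (0:ℝ) (1-r), |(FF z t).im| ≤ π*r := by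
    intro t ht
    rw [uIoc_of_le (by linarith : (0:ℝ) ≤ 1-r)] at ht
    obtain ⟨ht0, ht1⟩ := ht
    have htle1 : t ≤ 1 := by linarith
    have hcc : x*Real.cos (2*π/5)*t ≤ x := by
      have h1 : x*Real.cos (2*π/5) ≤ x :=
        mul_le_of_le_one_right hx0.le (by linarith [hc2_lt_half])
      have h2 : (x*Real.cos (2*π/5))*t ≤ (x*Real.cos (2*π/5))*1 :=
        mul_le_mul_of_nonneg_left htle1 (mul_nonneg hx0.le hc2_pos.le)
      nlinarith
    have hre2 : r/2 ≤ (1 - z*(t:ℂ)).re := by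
      rw [hzdef, re_seg]
      linarith
    have hv : 0 < (1 - z*(t:ℂ)).re := lt_of_lt_of_le (by linarith) hre2
    have harg := arg_le _ hv
    have himv : |(1 - z*(t:ℂ)).im| = x*Real.sin (2*π/5)*t := by
      rw [hzdef, im_seg, abs_neg, _root_.abs_of_nonneg]
      exact mul_nonneg (mul_nonneg hx0.le hs2_pos.le) ht0.le
    have hargle : |Complex.arg (1 - z*(t:ℂ))| ≤ π*r*t := by
      refine le_trans harg ?_
      rw [himv, div_le_iff₀ (lt_of_lt_of_le (by linarith) hre2)]
      have h1 : π*r*t*(r/2) ≤ π*r*t*(1 - z*(t:ℂ)).re :=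
        mul_le_mul_of_nonneg_left hre2 (by positivity)
      have heq : π*r*t*(r/2) = π/2*(x*t) := by rw [← hrsq]; ring
      have h2 : π/2*(x*Real.sin (2*π/5)*t) ≤ π/2*(x*t) := by
        nlinarith [mul_nonneg (le_of_lt (half_pos hπ))
          (mul_nonneg (mul_nonneg hx0.le ht0.le) (sub_nonneg.2 hs2_le))]
      linarith
    have hFFim : (FF z t).im = Complex.arg (1 - z*(t:ℂ)) / t := by
      rw [FF_eq (ne_of_gt ht0)]
      rw [Complex.div_ofReal_im, Complex.log_im]
    rw [hFFim, abs_div, _root_.abs_of_pos ht0]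
    rw [div_le_iff₀ ht0]
    calc |Complex.arg (1 - z*(t:ℂ))| ≤ π*r*t := hargle
      _ = π*r*t := rfl
  -- pointwise bound for t in (1-r, 1]
  have hbd2 : ∀ t ∈ Ι (1-r) 1, |(FF z t).im| ≤ 2*π := by
    intro t ht
    rw [uIoc_of_le (by linarith : 1-r ≤ 1)] at ht
    obtain ⟨ht0, ht1⟩ := ht
    have htpos : 0 < t := by linarith
    have hthalf : 1/2 ≤ t := by linarith
    have hFFim : (FF z t).im = Complex.arg (1 - z*(t:ℂ)) / t := by
      rw [FF_eq (ne_of_gt htpos)]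
      rw [Complex.div_ofReal_im, Complex.log_im]
    rw [hFFim, abs_div, _root_.abs_of_pos htpos, div_le_iff₀ htpos]
    have := Complex.abs_arg_le_pi (1 - z*(t:ℂ))
    nlinarith
  -- integrability of the imaginary parts
  have hcIm : ContinuousOn (fun t => (FF z t).im) (Icc (0:ℝ) 1) :=
    Complex.continuous_im.comp_continuousOn hcont
  have hint1 : IntervalIntegrable (fun t => (FF z t).im) volume 0 (1-r) := by
    apply ContinuousOn.intervalIntegrable
    refine hcIm.mono ?_
    rw [uIcc_of_le (by linarith : (0:ℝ) ≤ 1-r)]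
    exact Icc_subset_Icc (le_refl _) (by linarith)
  have hint2 : IntervalIntegrable (fun t => (FF z t).im) volume (1-r) 1 := by
    apply ContinuousOn.intervalIntegrable
    refine hcIm.mono ?_
    rw [uIcc_of_le (by linarith : 1-r ≤ 1)]
    exact Icc_subset_Icc (by linarith) (le_refl _)
  have hsplit := intervalIntegral.integral_add_adjacent_intervals hint1 hint2
  have hn1 : |∫ t in (0:ℝ)..(1-r), (FF z t).im| ≤ π*r * |1-r-0| := by
    have := intervalIntegral.norm_integral_le_of_norm_le_const (C := π*r)
      (f := fun t => (FF z t).im) (a := 0) (b := 1-r)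
      (fun t ht => by rw [Real.norm_eq_abs]; exact hbd1 t ht)
    rwa [Real.norm_eq_abs] at this
  have hn2 : |∫ t in (1-r)..1, (FF z t).im| ≤ 2*π * |1-(1-r)| := by
    have := intervalIntegral.norm_integral_le_of_norm_le_const (C := 2*π)
      (f := fun t => (FF z t).im) (a := 1-r) (b := 1)
      (fun t ht => by rw [Real.norm_eq_abs]; exact hbd2 t ht)
    rwa [Real.norm_eq_abs] at this
  rw [him, abs_neg, ← hsplit]
  have e1 : |1-r-0| = 1-r := by rw [sub_zero, _root_.abs_of_nonneg (by linarith)]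
  have e2 : |1-(1-r)| = r := by rw [_root_.abs_of_nonneg (by linarith)]; ring
  rw [e1] at hn1; rw [e2] at hn2
  calc |(∫ t in (0:ℝ)..(1-r), (FF z t).im) + ∫ t in (1-r)..1, (FF z t).im|
      ≤ |∫ t in (0:ℝ)..(1-r), (FF z t).im| + |∫ t in (1-r)..1, (FF z t).im| := abs_add_le _ _
    _ ≤ π*r*(1-r) + 2*π*r := by linarith
    _ ≤ 4*π*r := by nlinarith

lemma abs_xz (x : ℝ) (hx : 0 < x) : ‖(x:ℂ)*ζ5‖ = x := by
  rw [norm_mul, Complex.norm_real, Real.norm_eq_abs, abs_zeta, _root_.abs_of_pos hx, mul_one]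

lemma im_gfun_one : (gfun 1).im = 0 := by
  have hπ := Real.pi_pos
  have hconst : ∀ᶠ x in nhdsWithin (0:ℝ) (Ioi 0), (gfun x).im = (gfun 1).im := by
    filter_upwards [Ioc_mem_nhdsGT_of_mem (⟨le_refl 0, zero_lt_one⟩ : (0:ℝ) ∈ Ico (0:ℝ) 1)]
      with x hx
    rw [gfun_const hx]
  have ht1 : Tendsto (fun x : ℝ => (Li2 (1 + (x:ℂ)*ζ5)).im) (nhdsWithin 0 (Ioi 0)) (nhds 0) := by
    apply squeeze_zero_norm' (a := fun x => 4*π*Real.sqrt x)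
    · filter_upwards [Ioc_mem_nhdsGT_of_mem (⟨le_refl 0, by norm_num⟩ : (0:ℝ) ∈ Ico (0:ℝ) (1/4))]
        with x hx
      rw [Real.norm_eq_abs]
      exact im_li2_seg_small hx
    · have hs : Tendsto (fun x : ℝ => Real.sqrt x) (nhdsWithin 0 (Ioi 0)) (nhds 0) := by
        have hc := Real.continuous_sqrt.tendsto 0
        rw [Real.sqrt_zero] at hc
        exact hc.mono_left nhdsWithin_le_nhds
      have := hs.const_mul (4*π)
      simpa [mul_assoc] using this
  have ht2 : Tendsto (fun x : ℝ => (Li2 (-((x:ℂ)*ζ5))).im) (nhdsWithin 0 (Ioi 0)) (nhds 0) := by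
    apply squeeze_zero_norm' (a := fun x => 2*x)
    · filter_upwards [Ioc_mem_nhdsGT_of_mem (⟨le_refl 0, by norm_num⟩ : (0:ℝ) ∈ Ico (0:ℝ) (1/2))]
        with x hx
      rw [Real.norm_eq_abs]
      exact le_trans (Complex.abs_im_le_norm _) (li2_small hx)
    · have : Tendsto (fun x : ℝ => 2*x) (nhds (0:ℝ)) (nhds 0) := by
        simpa [Pi.mul_def] using (continuous_const.mul continuous_id').tendsto (0:ℝ)
      exact this.mono_left nhdsWithin_le_nhds
  have ht3 : Tendsto (fun x : ℝ =>
      (Complex.log (1 + (x:ℂ)*ζ5) * Complex.log (-((x:ℂ)*ζ5))).im)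
      (nhdsWithin 0 (Ioi 0)) (nhds 0) := by
    apply squeeze_zero_norm' (a := fun x => (3/2) * (x*|Real.log x|) + (3/2*π)*x)
    · filter_upwards [Ioc_mem_nhdsGT_of_mem (⟨le_refl 0, by norm_num⟩ : (0:ℝ) ∈ Ico (0:ℝ) (1/2))]
        with x hx
      have h1 : ‖Complex.log (1 + (x:ℂ)*ζ5)‖ ≤ 3/2 * x := by
        have := Complex.norm_log_one_add_half_le_self (z := (x:ℂ)*ζ5)
          (by rw [abs_xz x hx.1]; exact hx.2)
        rwa [abs_xz x hx.1] at this
      have h2 : ‖Complex.log (-((x:ℂ)*ζ5))‖ ≤ |Real.log x| + π := by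
        refine le_trans (Complex.norm_le_abs_re_add_abs_im _) ?_
        rw [Complex.log_re, Complex.log_im]
        have e : ‖-((x:ℂ)*ζ5)‖ = x := by
          rw [norm_neg, abs_xz x hx.1]
        rw [e]
        have := Complex.abs_arg_le_pi (-((x:ℂ)*ζ5))
        linarith
      rw [Real.norm_eq_abs]
      calc |(Complex.log (1 + (x:ℂ)*ζ5) * Complex.log (-((x:ℂ)*ζ5))).im|
          ≤ ‖Complex.log (1 + (x:ℂ)*ζ5) * Complex.log (-((x:ℂ)*ζ5))‖ :=
            Complex.abs_im_le_norm _
        _ = ‖Complex.log (1 + (x:ℂ)*ζ5)‖ * ‖Complex.log (-((x:ℂ)*ζ5))‖ :=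
            norm_mul _ _
        _ ≤ (3/2 * x) * (|Real.log x| + π) := by
            apply mul_le_mul h1 h2 (norm_nonneg _) (by linarith [hx.1])
        _ = (3/2) * (x*|Real.log x|) + (3/2*π)*x := by ring
    · have hxlog : Tendsto (fun x : ℝ => x*|Real.log x|) (nhdsWithin 0 (Ioi 0)) (nhds 0) := by
        have h := (tendsto_log_mul_rpow_nhdsGT_zero one_pos).abs
        rw [abs_zero] at h
        refine h.congr' ?_
        filter_upwards [eventually_mem_nhdsWithin] with x hx
        rw [Real.rpow_one, abs_mul, _root_.abs_of_pos (mem_Ioi.1 hx)]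
        ring
      have h1 := hxlog.const_mul (3/2 : ℝ)
      have h2 : Tendsto (fun x : ℝ => (3/2*π)*x) (nhdsWithin (0:ℝ) (Ioi 0)) (nhds 0) := by
        have : Tendsto (fun x : ℝ => (3/2*π)*x) (nhds (0:ℝ)) (nhds 0) := by
          simpa [Pi.mul_def] using (continuous_const.mul continuous_id').tendsto (0:ℝ)
        exact this.mono_left nhdsWithin_le_nhds
      simpa using h1.add h2
  have htend : Tendsto (fun x => (gfun x).im) (nhdsWithin (0:ℝ) (Ioi 0)) (nhds 0) := by
    have hsum := (ht1.add ht2).add ht3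
    rw [show ((0:ℝ)+0+0 : ℝ) = 0 by norm_num] at hsum
    refine hsum.congr ?_
    intro x
    simp [gfun, Complex.add_im]
  have heq : (fun x => (gfun x).im) =ᶠ[nhdsWithin (0:ℝ) (Ioi 0)] (fun _ => (gfun 1).im) := hconst
  have h2 : Tendsto (fun x => (gfun x).im) (nhdsWithin (0:ℝ) (Ioi 0)) (nhds ((gfun 1).im)) :=
    Filter.Tendsto.congr' heq.symm tendsto_const_nhds
  exact (tendsto_nhds_unique h2 htend)

/-! ### closed-form values -/

lemma w_eq : goldφ * Complex.exp (↑π * I / 5) = 1 + ζ5 := by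
  have hφ : goldφ = ((2 * Real.cos (π/5) : ℝ) : ℂ) := by
    rw [goldφ, Real.cos_pi_div_five]; push_cast; ring
  have hcos : ((2 * Real.cos (π/5) : ℝ) : ℂ)
      = Complex.exp (↑π*I/5) + Complex.exp (-(↑π*I/5)) := by
    push_cast [Complex.ofReal_cos]
    rw [show (↑π*I/5 : ℂ) = (↑π/5)*I by ring, show (-((↑π:ℂ)/5*I)) = (-(↑π/5))*I by ring]
    rw [Complex.exp_mul_I, Complex.exp_mul_I, Complex.cos_neg, Complex.sin_neg]
    ring
  rw [hφ, hcos, add_mul, ← Complex.exp_add, ← Complex.exp_add]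
  rw [show (-(↑π*I/5) + ↑π*I/5 : ℂ) = 0 by ring, Complex.exp_zero]
  rw [show (↑π*I/5 + ↑π*I/5 : ℂ) = 2*↑π*I/5 by ring, ζ5]
  ring

lemma harg_neg : Complex.arg (-ζ5) = -(3*π/5) := by
  have h1 : -ζ5 = Complex.cos ↑(-(3*π/5)) + Complex.sin ↑(-(3*π/5)) * I := by
    rw [← Complex.ofReal_cos, ← Complex.ofReal_sin, Real.cos_neg, Real.sin_neg,
      show (3*π/5 : ℝ) = π - 2*π/5 by ring, Real.cos_pi_sub, Real.sin_pi_sub, zeta_eq]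
    push_cast
    ring
  rw [h1]
  exact Complex.arg_cos_add_sin_mul_I ⟨by linarith [Real.pi_pos], by linarith [Real.pi_pos]⟩

lemma abs_neg_zeta : ‖-ζ5‖ = 1 := by
  rw [norm_neg, abs_zeta]

lemma hfac : (1+ζ5 : ℂ) = (((1+Real.sqrt 5)/2 : ℝ) : ℂ) * Complex.exp (((π/5 : ℝ):ℂ) * I) := by
  rw [← w_eq, goldφ]
  norm_num
  left
  congr 1
  push_cast
  ring

lemma habs1 : ‖1+ζ5‖ = (1+Real.sqrt 5)/2 := by
  rw [hfac, norm_mul, Complex.norm_real, Real.norm_eq_abs, Complex.norm_exp_ofReal_mul_I, mul_one,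
    _root_.abs_of_nonneg (by positivity)]

lemma harg1 : Complex.arg (1+ζ5) = π/5 := by
  rw [hfac, Complex.arg_real_mul _ (by positivity : 0 < (1+Real.sqrt 5)/2)]
  rw [Complex.exp_mul_I]
  exact Complex.arg_cos_add_sin_mul_I ⟨by linarith [Real.pi_pos], by linarith [Real.pi_pos]⟩

lemma logre1 : (Complex.log (1+ζ5)).re = Real.log ((1+Real.sqrt 5)/2) := by
  rw [Complex.log_re, habs1]

lemma logim1 : (Complex.log (1+ζ5)).im = π/5 := by
  rw [Complex.log_im, harg1]

lemma logre2 : (Complex.log (-ζ5)).re = 0 := by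
  rw [Complex.log_re, abs_neg_zeta, Real.log_one]

lemma logim2 : (Complex.log (-ζ5)).im = -(3*π/5) := by
  rw [Complex.log_im, harg_neg]

end BW

theorem stmt_10 :
    2 * D2 ζ5 - D2 (ζ5 ^ 2) = 2 * D2 (goldφ * Complex.exp (Real.pi * Complex.I / 5)) := by
  have hw : goldφ * Complex.exp (↑Real.pi * Complex.I / 5) = 1 + ζ5 := BW.w_eq
  have hD1 : D2 ζ5 = (Li2 ζ5).im := by
    rw [D2, BW.abs_zeta, Real.log_one, mul_zero, add_zero]
  have hD2 : D2 (ζ5^2) = (Li2 (ζ5^2)).im := by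
    rw [D2, norm_pow, BW.abs_zeta, one_pow, Real.log_one, mul_zero, add_zero]
  have hDw : D2 (goldφ * Complex.exp (↑Real.pi * Complex.I / 5))
      = (Li2 (1+ζ5)).im + (-(3*Real.pi/5)) * Real.log ((1+Real.sqrt 5)/2) := by
    rw [D2, hw, show (1:ℂ) - (1+ζ5) = -ζ5 by ring, BW.harg_neg, BW.habs1]
  have hdup : (Li2 (ζ5^2)).im = 2*(Li2 ζ5).im + 2*(Li2 (-ζ5)).im := by
    rw [BW.dup]; simp
  have hrefl : (Li2 (1+ζ5)).im + (Li2 (-ζ5)).im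
      + Real.log ((1+Real.sqrt 5)/2) * (-(3*Real.pi/5)) = 0 := by
    have h := BW.im_gfun_one
    rw [BW.gfun] at h
    simp only [Complex.ofReal_one, one_mul] at h
    rw [Complex.add_im, Complex.add_im, Complex.mul_im] at h
    rw [BW.logre1, BW.logim1, BW.logre2, BW.logim2] at h
    linarith [h]
  rw [hD1, hD2, hDw]
  linarith [hdup, hrefl]
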